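/- The following four ℚ-linear subspaces of ℌ coincide: A1 := span{φ(u ∗ v)x : u, v ∈ yℌ}; A2 := span{(u ◇ v)x : u, v ∈ yℌ}; A3 := span{y w1 (x+y)^n w2 x − y (x+y)^n (τ(w1) ◇ w2) x : n ∈ ℤ≥0, w1, w2 ∈ ℌ}; A4 := span{y w1 w2 x − y (τ(w1) ◇ w2) x : w1, w2 ∈ ℌ}. -/
import Mathlib


open scoped BigOperators

noncomputable section

/-- `ℌ = ℚ⟨x,y⟩`, the free noncommutative polynomial ring in two indeterminates,
realized as the free `ℚ`-algebra on `Bool` (`false ↦ x`, `true ↦ y`). -/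
abbrev H : Type := FreeAlgebra ℚ Bool

/-- The indeterminate `x`. -/
def Hx : H := FreeAlgebra.ι ℚ false

/-- The indeterminate `y`. -/
def Hy : H := FreeAlgebra.ι ℚ true

/-- The multiple zeta value `ζ(k₁,…,k_r) = ∑_{0<n₁<⋯<n_r} 1/(n₁^{k₁}⋯n_r^{k_r})`. -/
def MZV (r : ℕ) (k : Fin r → ℕ) : ℝ :=
  ∑' n : {n : Fin r → ℕ // (∀ i, 0 < n i) ∧ StrictMono n},
    ∏ i, (1 : ℝ) / (n.1 i : ℝ) ^ (k i)

/-- `Z : yℌx → ℝ` is the `ℚ`-linear map with `Z(y x^{k₁-1} ⋯ y x^{k_r-1}) = ζ(k₁,…,k_r)`.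
We encode it as a `ℚ`-linear map on all of `ℌ` whose values on the basis monomials
`y x^{k₁-1} ⋯ y x^{k_r-1}` (with `k_r ≥ 2`) of `yℌx` are the multiple zeta values;
these values determine `Z` uniquely on the subspace `yℌx`. -/
def IsZetaMap (Z : H →ₗ[ℚ] ℝ) : Prop :=
  ∀ (r : ℕ) (k : Fin (r + 1) → ℕ), (∀ i, 1 ≤ k i) → 2 ≤ k (Fin.last r) →
    Z ((List.ofFn fun i => Hy * Hx ^ (k i - 1)).prod) = MZV (r + 1) k

/-- The family `f(A,B) = (Z(A(x+y)^s B))_{s ≥ 0}`. -/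
def fam (Z : H →ₗ[ℚ] ℝ) (A B : H) : ℕ → ℝ := fun s => Z (A * (Hx + Hy) ^ s * B)

/-- The `ℚ`-bilinear product `◇` on `ℌ`, characterized by its recursive defining
properties (which determine it uniquely). -/
def IsDiamond (d : H →ₗ[ℚ] H →ₗ[ℚ] H) : Prop :=
  (∀ w, d w 1 = w) ∧ (∀ w, d 1 w = w) ∧
  (∀ w1 w2, d (Hx * w1) (Hx * w2) = Hx * d w1 (Hx * w2) - Hx * d (Hy * w1) w2) ∧
  (∀ w1 w2, d (Hx * w1) (Hy * w2) = Hx * d w1 (Hy * w2) + Hy * d (Hx * w1) w2) ∧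
  (∀ w1 w2, d (Hy * w1) (Hx * w2) = Hy * d w1 (Hx * w2) + Hx * d (Hy * w1) w2) ∧
  (∀ w1 w2, d (Hy * w1) (Hy * w2) = Hy * d w1 (Hy * w2) - Hy * d (Hx * w1) w2)

/-- The harmonic product `∗` on `ℌ`, characterized by its recursive defining
properties (which determine it uniquely). -/
def IsHarmonic (st : H →ₗ[ℚ] H →ₗ[ℚ] H) : Prop :=
  (∀ w, st w 1 = w) ∧ (∀ w, st 1 w = w) ∧
  (∀ w1 w2, st (Hx * w1) w2 = Hx * st w1 w2) ∧
  (∀ w1 w2, st w1 (Hx * w2) = Hx * st w1 w2) ∧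
  (∀ w1 w2, st (Hy * w1) (Hy * w2) = Hy * (st w1 (Hy * w2) + st (Hy * w1) w2 + Hx * st w1 w2))

/-- The anti-automorphism `τ` of `ℌ` interchanging `x` and `y`, characterized by
being `ℚ`-linear, anti-multiplicative, unital, and swapping the generators. -/
def IsTau (t : H →ₗ[ℚ] H) : Prop :=
  t 1 = 1 ∧ (∀ a b, t (a * b) = t b * t a) ∧ t Hx = Hy ∧ t Hy = Hx

/-- The automorphism `φ` of `ℌ` with `φ(x) = x + y` and `φ(y) = -y`. -/
def phi : H →ₐ[ℚ] H := FreeAlgebra.lift ℚ (fun b => if b then -Hy else Hx + Hy)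

/-- The automorphism `S₁` of `ℌ` with `S₁(x) = x` and `S₁(y) = x + y`. -/
def S1 : H →ₐ[ℚ] H := FreeAlgebra.lift ℚ (fun b => if b then Hx + Hy else Hx)

/-- The Dirichlet series `∑_{n ≥ 1} a_n / n^s` (with `a n` the coefficient indexed by
`n + 1`) converges to `L` at `s`, i.e. its partial sums tend to `L`. -/
def DSConv (a : ℕ → ℝ) (s : ℕ) (L : ℝ) : Prop :=
  Filter.Tendsto (fun N => ∑ n ∈ Finset.range N, a n / ((n : ℝ) + 1) ^ s)
    Filter.atTop (nhds L)



/-! ### Auxiliary infrastructure: word induction in `ℌ` -/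

/-- Words built by left multiplication by generators. -/
inductive IsWordL : H → Prop
  | one : IsWordL 1
  | x {w : H} : IsWordL w → IsWordL (Hx * w)
  | y {w : H} : IsWordL w → IsWordL (Hy * w)

/-- Words built by right multiplication by generators. -/
inductive IsWordR : H → Prop
  | one : IsWordR 1
  | x {w : H} : IsWordR w → IsWordR (w * Hx)
  | y {w : H} : IsWordR w → IsWordR (w * Hy)

lemma IsWordL.mul {a b : H} (ha : IsWordL a) (hb : IsWordL b) : IsWordL (a * b) := by
  induction ha with
  | one => simpa using hb
  | x h ih => rw [mul_assoc]; exact IsWordL.x ih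
  | y h ih => rw [mul_assoc]; exact IsWordL.y ih

lemma IsWordR.mul {a b : H} (ha : IsWordR a) (hb : IsWordR b) : IsWordR (a * b) := by
  induction hb with
  | one => simpa using ha
  | x h ih => rw [← mul_assoc]; exact IsWordR.x ih
  | y h ih => rw [← mul_assoc]; exact IsWordR.y ih

lemma span_isWordL : Submodule.span ℚ {w : H | IsWordL w} = ⊤ := by
  rw [eq_top_iff]
  rintro a -
  induction a using FreeAlgebra.induction with
  | grade0 r =>
      rw [Algebra.algebraMap_eq_smul_one]
      exact Submodule.smul_mem _ _ (Submodule.subset_span IsWordL.one)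
  | grade1 b =>
      cases b
      · exact Submodule.subset_span (by simpa [Hx] using IsWordL.x IsWordL.one)
      · exact Submodule.subset_span (by simpa [Hy] using IsWordL.y IsWordL.one)
  | mul a b ha hb =>
      have h := Submodule.mul_mem_mul ha hb
      rw [Submodule.span_mul_span] at h
      refine Submodule.span_le.mpr ?_ h
      rintro w ⟨w1, h1, w2, h2, rfl⟩
      exact Submodule.subset_span (h1.mul h2)
  | add a b ha hb => exact Submodule.add_mem _ ha hb

lemma span_isWordR : Submodule.span ℚ {w : H | IsWordR w} = ⊤ := by
  rw [eq_top_iff]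
  rintro a -
  induction a using FreeAlgebra.induction with
  | grade0 r =>
      rw [Algebra.algebraMap_eq_smul_one]
      exact Submodule.smul_mem _ _ (Submodule.subset_span IsWordR.one)
  | grade1 b =>
      cases b
      · exact Submodule.subset_span (by simpa [Hx] using IsWordR.x IsWordR.one)
      · exact Submodule.subset_span (by simpa [Hy] using IsWordR.y IsWordR.one)
  | mul a b ha hb =>
      have h := Submodule.mul_mem_mul ha hb
      rw [Submodule.span_mul_span] at h
      refine Submodule.span_le.mpr ?_ h
      rintro w ⟨w1, h1, w2, h2, rfl⟩
      exact Submodule.subset_span (h1.mul h2)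
  | add a b ha hb => exact Submodule.add_mem _ ha hb

lemma memL_of_words {M : Submodule ℚ H} (h : ∀ w : H, IsWordL w → w ∈ M) (a : H) : a ∈ M := by
  have h2 : Submodule.span ℚ {w : H | IsWordL w} ≤ M := Submodule.span_le.mpr h
  rw [span_isWordL] at h2
  exact h2 trivial

lemma memR_of_words {M : Submodule ℚ H} (h : ∀ w : H, IsWordR w → w ∈ M) (a : H) : a ∈ M := by
  have h2 : Submodule.span ℚ {w : H | IsWordR w} ≤ M := Submodule.span_le.mpr h
  rw [span_isWordR] at h2
  exact h2 trivial

lemma eqL_of_words {f g : H →ₗ[ℚ] H} (h : ∀ w : H, IsWordL w → f w = g w) (a : H) :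
    f a = g a := by
  have h2 := memL_of_words (M := LinearMap.ker (f - g)) (fun w hw => by
    simp [LinearMap.mem_ker, sub_eq_zero, h w hw]) a
  simpa [LinearMap.mem_ker, sub_eq_zero] using h2

/-! ### Properties of the diamond product -/

section DiamondLemmas

variable {d : H →ₗ[ℚ] H →ₗ[ℚ] H} {t : H →ₗ[ℚ] H} {st : H →ₗ[ℚ] H →ₗ[ℚ] H}

/-- `(x+y)u ◇ w = (x+y)(u ◇ w)`. -/
lemma d_zl (hd : IsDiamond d) (u : H) : ∀ w, d ((Hx + Hy) * u) w = (Hx + Hy) * d u w := by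
  obtain ⟨h1, h2, hxx, hxy, hyx, hyy⟩ := hd
  have key : ∀ w : H, IsWordL w → d ((Hx + Hy) * u) w = (Hx + Hy) * d u w := by
    intro w hw
    have expand : d ((Hx + Hy) * u) w = d (Hx * u) w + d (Hy * u) w := by
      rw [add_mul, map_add, LinearMap.add_apply]
    cases hw with
    | one => rw [expand, h1, h1, h1, add_mul]
    | @x w' hw' => rw [expand, hxx, hyx]; noncomm_ring
    | @y w' hw' => rw [expand, hxy, hyy]; noncomm_ring
  intro w
  exact eqL_of_words (f := d ((Hx + Hy) * u))
    (g := (LinearMap.mulLeft ℚ (Hx + Hy)).comp (d u)) (fun w hw => by simpa using key w hw) w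

lemma d_sum (hd : IsDiamond d) (u w : H) :
    (Hx + Hy) * d u w = d (Hx * u) w + d (Hy * u) w := by
  rw [← d_zl hd u w, add_mul, map_add, LinearMap.add_apply]

/-- `u ◇ (x+y)w = (x+y)(u ◇ w)`. -/
lemma d_zr (hd : IsDiamond d) (w : H) : ∀ u, d u ((Hx + Hy) * w) = (Hx + Hy) * d u w := by
  have h1 := hd.1; have h2 := hd.2.1
  have hxx := hd.2.2.1; have hxy := hd.2.2.2.1; have hyx := hd.2.2.2.2.1
  have hyy := hd.2.2.2.2.2
  have key : ∀ u : H, IsWordL u → d u ((Hx + Hy) * w) = (Hx + Hy) * d u w := by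
    intro u hu
    induction hu with
    | one => rw [h2, h2]
    | @x u' hu' ih =>
      calc d (Hx * u') ((Hx + Hy) * w)
          = d (Hx * u') (Hx * w) + d (Hx * u') (Hy * w) := by rw [add_mul, map_add]
        _ = (Hx * d u' (Hx * w) - Hx * d (Hy * u') w)
              + (Hx * d u' (Hy * w) + Hy * d (Hx * u') w) := by rw [hxx, hxy]
        _ = Hx * (d u' (Hx * w) + d u' (Hy * w)) - Hx * d (Hy * u') w
              + Hy * d (Hx * u') w := by noncomm_ring
        _ = Hx * d u' ((Hx + Hy) * w) - Hx * d (Hy * u') w + Hy * d (Hx * u') w := by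
              rw [add_mul, map_add]
        _ = Hx * ((Hx + Hy) * d u' w) - Hx * d (Hy * u') w + Hy * d (Hx * u') w := by rw [ih]
        _ = Hx * (d (Hx * u') w + d (Hy * u') w) - Hx * d (Hy * u') w + Hy * d (Hx * u') w := by
              rw [d_sum ⟨h1, h2, hxx, hxy, hyx, hyy⟩]
        _ = (Hx + Hy) * d (Hx * u') w := by noncomm_ring
    | @y u' hu' ih =>
      calc d (Hy * u') ((Hx + Hy) * w)
          = d (Hy * u') (Hx * w) + d (Hy * u') (Hy * w) := by rw [add_mul, map_add]
        _ = (Hy * d u' (Hx * w) + Hx * d (Hy * u') w)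
              + (Hy * d u' (Hy * w) - Hy * d (Hx * u') w) := by rw [hyx, hyy]
        _ = Hy * (d u' (Hx * w) + d u' (Hy * w)) + Hx * d (Hy * u') w
              - Hy * d (Hx * u') w := by noncomm_ring
        _ = Hy * d u' ((Hx + Hy) * w) + Hx * d (Hy * u') w - Hy * d (Hx * u') w := by
              rw [add_mul, map_add]
        _ = Hy * ((Hx + Hy) * d u' w) + Hx * d (Hy * u') w - Hy * d (Hx * u') w := by rw [ih]
        _ = Hy * (d (Hx * u') w + d (Hy * u') w) + Hx * d (Hy * u') w - Hy * d (Hx * u') w := by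
              rw [d_sum ⟨h1, h2, hxx, hxy, hyx, hyy⟩]
        _ = (Hx + Hy) * d (Hy * u') w := by noncomm_ring
  intro u
  exact eqL_of_words (f := d.flip ((Hx + Hy) * w))
    (g := (LinearMap.mulLeft ℚ (Hx + Hy)).comp (d.flip w))
    (fun u hu => by simpa using key u hu) u

lemma d_zpow (hd : IsDiamond d) (n : ℕ) (u w : H) :
    d ((Hx + Hy) ^ n * u) w = (Hx + Hy) ^ n * d u w := by
  induction n generalizing u with
  | zero => simp
  | succ n ih =>
      rw [pow_succ', mul_assoc, d_zl hd, ih, ← mul_assoc, ← pow_succ']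

lemma d_mix (hd : IsDiamond d) (a w : H) :
    d a (Hx * w) + d a (Hy * w) = d (Hx * a) w + d (Hy * a) w := by
  have h : d a ((Hx + Hy) * w) = (Hx + Hy) * d a w := d_zr hd w a
  rw [add_mul, map_add] at h
  rw [h, d_sum hd]

/-! ### Properties of `τ` -/

lemma t_t (ht : IsTau t) (a : H) : t (t a) = a := by
  obtain ⟨h1, hm, hx, hy⟩ := ht
  have key : ∀ w : H, IsWordL w → t (t w) = w := by
    intro w hw
    induction hw with
    | one => rw [h1, h1]
    | @x w h ih => rw [hm, hx, hm, hy, ih]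
    | @y w h ih => rw [hm, hy, hm, hx, ih]
  exact eqL_of_words (f := t.comp t) (g := LinearMap.id)
    (fun w hw => by simpa using key w hw) a

lemma t_zpow (ht : IsTau t) (n : ℕ) : t ((Hx + Hy) ^ n) = (Hx + Hy) ^ n := by
  obtain ⟨h1, hm, hx, hy⟩ := ht
  induction n with
  | zero => simpa using h1
  | succ n ih =>
      rw [pow_succ, hm, ih, map_add, hx, hy, add_comm Hy Hx]
      exact (pow_mul_comm' _ _).symm

/-! ### Properties of `φ` -/

lemma phi_x : phi Hx = Hx + Hy := by simp [phi, Hx]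

lemma phi_y : phi Hy = -Hy := by simp [phi, Hy]

lemma phi_phi (a : H) : phi (phi a) = a := by
  have h : phi.comp phi = AlgHom.id ℚ H := by
    ext b
    cases b
    · show phi (phi (FreeAlgebra.ι ℚ false)) = FreeAlgebra.ι ℚ false
      rw [show FreeAlgebra.ι ℚ false = Hx from rfl, phi_x, map_add, phi_x, phi_y]
      abel
    · show phi (phi (FreeAlgebra.ι ℚ true)) = FreeAlgebra.ι ℚ true
      rw [show FreeAlgebra.ι ℚ true = Hy from rfl, phi_y, map_neg, phi_y, neg_neg]
  calc phi (phi a) = (phi.comp phi) a := rfl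
    _ = a := by rw [h]; rfl

/-- The fundamental identity `φ(u ∗ v) = φ(u) ◇ φ(v)`. -/
lemma phi_st (hst : IsHarmonic st) (hd : IsDiamond d) :
    ∀ u v, phi (st u v) = d (phi u) (phi v) := by
  obtain ⟨s1, s2, sxl, sxr, syy⟩ := hst
  have hd1 := hd.1
  have hd2 := hd.2.1
  have hyy := hd.2.2.2.2.2
  have key : ∀ u : H, IsWordL u → ∀ v, phi (st u v) = d (phi u) (phi v) := by
    intro u hu
    induction hu with
    | one => intro v; rw [s2, map_one, hd2]
    | @x u' hu' ih =>
        intro v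
        rw [sxl, map_mul, phi_x, ih, ← d_zl hd, ← phi_x, ← map_mul]
    | @y u' hu' ih =>
        have keyv : ∀ v : H, IsWordL v →
            phi (st (Hy * u') v) = d (phi (Hy * u')) (phi v) := by
          intro v hv
          induction hv with
          | one => rw [s1, map_one, hd1]
          | @x v' hv' ihv =>
              rw [sxr, map_mul, phi_x, ihv, ← d_zr hd, ← phi_x, ← map_mul]
          | @y v' hv' ihv =>
              have pyu : phi (Hy * u') = -(Hy * phi u') := by rw [map_mul, phi_y, neg_mul]
              have pyv : phi (Hy * v') = -(Hy * phi v') := by rw [map_mul, phi_y, neg_mul]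
              have e1 : phi ((st (Hy * u')) (Hy * v'))
                  = -Hy * (phi ((st u') (Hy * v')) + phi ((st (Hy * u')) v')
                      + (Hx + Hy) * phi ((st u') v')) := by
                rw [syy, map_mul phi, map_add phi, map_add phi, map_mul phi, phi_x, phi_y]
              rw [e1, ih (Hy * v'), ihv, ih v', pyu, pyv]
              simp only [map_neg, LinearMap.neg_apply, neg_neg]
              rw [hyy, d_sum hd (phi u') (phi v')]
              noncomm_ring
        intro v
        exact eqL_of_words (f := phi.toLinearMap.comp (st (Hy * u')))
          (g := (d (phi (Hy * u'))).comp phi.toLinearMap)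
          (fun w hw => by simpa using keyv w hw) v
  intro u v
  exact eqL_of_words (f := phi.toLinearMap.comp (st.flip v))
    (g := (d.flip (phi v)).comp phi.toLinearMap)
    (fun w hw => by simpa using key w hw v) u

/-! ### The telescoping identities and the span equalities -/

lemma K1 (hd : IsDiamond d) (ht : IsTau t) (w1 w2 : H) :
    (Hy * (w1 * Hy) * w2 * Hx - Hy * d (t (w1 * Hy)) w2 * Hx)
      - (Hy * w1 * (Hy * w2) * Hx - Hy * d (t w1) (Hy * w2) * Hx)
    = d (Hy * t w1) (Hy * w2) * Hx := by
  rw [ht.2.1, ht.2.2.2, hd.2.2.2.2.2]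
  noncomm_ring

lemma K2 (hd : IsDiamond d) (ht : IsTau t) (w1 w2 : H) :
    (Hy * (w1 * Hx) * w2 * Hx - Hy * d (t (w1 * Hx)) w2 * Hx)
      - (Hy * w1 * (Hx * w2) * Hx - Hy * d (t w1) (Hx * w2) * Hx)
    = -(d (Hy * t w1) (Hy * w2) * Hx) := by
  rw [ht.2.1, ht.2.2.1, hd.2.2.2.2.2 (t w1) w2]
  have e : d (t w1) (Hx * w2)
      = d (Hx * t w1) w2 + d (Hy * t w1) w2 - d (t w1) (Hy * w2) := by
    rw [eq_sub_iff_add_eq, d_mix hd]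
  rw [e]
  noncomm_ring

lemma span12 (hst : IsHarmonic st) (hd : IsDiamond d) :
    Submodule.span ℚ {w : H | ∃ p q : H, w = phi (st (Hy * p) (Hy * q)) * Hx}
      = Submodule.span ℚ {w : H | ∃ p q : H, w = d (Hy * p) (Hy * q) * Hx} := by
  have key : ∀ p q : H, phi (st (Hy * p) (Hy * q)) = d (Hy * phi p) (Hy * phi q) := by
    intro p q
    rw [phi_st hst hd, map_mul phi, map_mul phi, phi_y]
    simp only [neg_mul, map_neg, LinearMap.neg_apply, neg_neg]
  apply le_antisymm <;> rw [Submodule.span_le]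
  · rintro w ⟨p, q, rfl⟩
    rw [key]
    exact Submodule.subset_span ⟨phi p, phi q, rfl⟩
  · rintro w ⟨p, q, rfl⟩
    refine Submodule.subset_span ⟨phi p, phi q, ?_⟩
    rw [key, phi_phi, phi_phi]

lemma span24 (hd : IsDiamond d) (ht : IsTau t) :
    Submodule.span ℚ {w : H | ∃ p q : H, w = d (Hy * p) (Hy * q) * Hx}
      = Submodule.span ℚ {w : H | ∃ w1 w2 : H,
          w = Hy * w1 * w2 * Hx - Hy * d (t w1) w2 * Hx} := by
  apply le_antisymm
  · rw [Submodule.span_le]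
    rintro w ⟨p, q, rfl⟩
    have h := K1 hd ht (t p) q
    rw [t_t ht] at h
    rw [← h]
    exact sub_mem (Submodule.subset_span ⟨t p * Hy, q, rfl⟩)
      (Submodule.subset_span ⟨t p, Hy * q, by rw [t_t ht]⟩)
  · rw [Submodule.span_le]
    rintro w ⟨w1, w2, rfl⟩
    set A2 := Submodule.span ℚ {w : H | ∃ p q : H, w = d (Hy * p) (Hy * q) * Hx} with hA2
    have key : ∀ w1 : H, IsWordR w1 → ∀ w2 : H,
        Hy * w1 * w2 * Hx - Hy * d (t w1) w2 * Hx ∈ A2 := by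
      intro w1 hw1
      induction hw1 with
      | one =>
          intro w2
          simp only [ht.1, hd.2.1, mul_one]
          simp
      | @x w hw ih =>
          intro w2
          have h := K2 hd ht w w2
          rw [eq_add_of_sub_eq h]
          exact add_mem (neg_mem (Submodule.subset_span ⟨t w, w2, rfl⟩)) (ih (Hx * w2))
      | @y w hw ih =>
          intro w2
          have h := K1 hd ht w w2
          rw [eq_add_of_sub_eq h]
          exact add_mem (Submodule.subset_span ⟨t w, w2, rfl⟩) (ih (Hy * w2))
    set L : H →ₗ[ℚ] H :=
      ((LinearMap.mulRight ℚ Hx).comp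
          ((LinearMap.mulRight ℚ w2).comp (LinearMap.mulLeft ℚ Hy)))
        - ((LinearMap.mulRight ℚ Hx).comp
            ((LinearMap.mulLeft ℚ Hy).comp ((d.flip w2).comp t))) with hL
    have hLa : ∀ a : H, L a = Hy * a * w2 * Hx - Hy * d (t a) w2 * Hx := by
      intro a
      simp [hL]
    have hmem := memR_of_words (M := Submodule.comap L A2) (fun w hw => by
      simpa [Submodule.mem_comap, hLa] using key w hw w2) w1
    simpa [Submodule.mem_comap, hLa] using hmem

lemma span34 (hd : IsDiamond d) (ht : IsTau t) :
    Submodule.span ℚ {w : H | ∃ (n : ℕ) (w1 w2 : H),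
        w = Hy * w1 * (Hx + Hy) ^ n * w2 * Hx - Hy * (Hx + Hy) ^ n * d (t w1) w2 * Hx}
      = Submodule.span ℚ {w : H | ∃ w1 w2 : H,
          w = Hy * w1 * w2 * Hx - Hy * d (t w1) w2 * Hx} := by
  apply le_antisymm
  · rw [Submodule.span_le]
    rintro w ⟨n, w1, w2, rfl⟩
    refine Submodule.subset_span ⟨w1 * (Hx + Hy) ^ n, w2, ?_⟩
    rw [ht.2.1, t_zpow ht, d_zpow hd]
    noncomm_ring
  · rw [Submodule.span_le]
    rintro w ⟨w1, w2, rfl⟩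
    refine Submodule.subset_span ⟨0, w1, w2, ?_⟩
    simp

end DiamondLemmas


/-- The four `ℚ`-subspaces of `ℌ` coincide:
`A₁ = span{φ(u ∗ v)x : u,v ∈ yℌ}`, `A₂ = span{(u ◇ v)x : u,v ∈ yℌ}`,
`A₃ = span{y w₁ (x+y)^n w₂ x − y (x+y)^n (τ(w₁) ◇ w₂) x}`,
`A₄ = span{y w₁ w₂ x − y (τ(w₁) ◇ w₂) x}`. -/
theorem statement8 (st : H →ₗ[ℚ] H →ₗ[ℚ] H) (hst : IsHarmonic st)
    (d : H →ₗ[ℚ] H →ₗ[ℚ] H) (hd : IsDiamond d)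
    (t : H →ₗ[ℚ] H) (ht : IsTau t) :
    Submodule.span ℚ {w : H | ∃ p q : H, w = phi (st (Hy * p) (Hy * q)) * Hx}
        = Submodule.span ℚ {w : H | ∃ p q : H, w = d (Hy * p) (Hy * q) * Hx} ∧
    Submodule.span ℚ {w : H | ∃ p q : H, w = d (Hy * p) (Hy * q) * Hx}
        = Submodule.span ℚ {w : H | ∃ (n : ℕ) (w1 w2 : H),
            w = Hy * w1 * (Hx + Hy) ^ n * w2 * Hx
              - Hy * (Hx + Hy) ^ n * d (t w1) w2 * Hx} ∧
    Submodule.span ℚ {w : H | ∃ (n : ℕ) (w1 w2 : H),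
            w = Hy * w1 * (Hx + Hy) ^ n * w2 * Hx
              - Hy * (Hx + Hy) ^ n * d (t w1) w2 * Hx}
        = Submodule.span ℚ {w : H | ∃ w1 w2 : H,
            w = Hy * w1 * w2 * Hx - Hy * d (t w1) w2 * Hx} := by
  refine ⟨span12 hst hd, (span24 hd ht).trans (span34 hd ht).symm, span34 hd ht⟩


end
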